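/- Let R be a ring and M an R-bimodule. The trivial extension T(R, M) (the square-zero extension of R by M, with multiplication (r, m)(s, n) = (rs, rn + ms)) is a GWNC ring if and only if R is a GWNC ring. -/
import Mathlib

def IsWeaklyNilCleanElem {R : Type*} [Ring R] (a : R) : Prop :=
  ∃ e q : R, IsIdempotentElem e ∧ IsNilpotent q ∧ (a = q + e ∨ a = q - e)

def IsGWNCRing (R : Type*) [Ring R] : Prop :=
  ∀ a : R, ¬IsUnit a → IsWeaklyNilCleanElem a

open TrivSqZeroExt in
lemma tsze_nilpotent {R M : Type*} [Ring R] [AddCommGroup M]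
    [Module R M] [Module Rᵐᵒᵖ M] [SMulCommClass R Rᵐᵒᵖ M]
    (x : TrivSqZeroExt R M) (h : IsNilpotent x.fst) : IsNilpotent x := by
  obtain ⟨k, hk⟩ := h
  refine ⟨2 * k, ?_⟩
  have h1 : (x ^ k).fst = 0 := by rw [fst_pow, hk]
  have h2 : x ^ k = inr (x ^ k).snd := by
    conv_lhs => rw [← inl_fst_add_inr_snd_eq (x ^ k)]
    rw [h1, inl_zero, zero_add]
  rw [two_mul, pow_add, h2, inr_mul_inr]

theorem trivSqZeroExt_isGWNC_iff (R M : Type*) [Ring R] [AddCommGroup M]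
    [Module R M] [Module Rᵐᵒᵖ M] [SMulCommClass R Rᵐᵒᵖ M] :
    IsGWNCRing (TrivSqZeroExt R M) ↔ IsGWNCRing R := by
  open TrivSqZeroExt in
  constructor
  · intro h a ha
    obtain ⟨e, q, he, hq, hqe⟩ := h (inl a) (by
      rw [isUnit_iff_isUnit_fst, fst_inl]; exact ha)
    refine ⟨e.fst, q.fst, ?_, ?_, ?_⟩
    · have := congrArg TrivSqZeroExt.fst (he : e * e = e)
      simpa [IsIdempotentElem] using this
    · obtain ⟨n, hn⟩ := hq
      exact ⟨n, by rw [← fst_pow, hn, fst_zero]⟩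
    · rcases hqe with h' | h' <;> [left; right] <;>
        simpa using congrArg TrivSqZeroExt.fst h'
  · intro h x hx
    have hfst : ¬IsUnit x.fst := fun hu => hx (isUnit_iff_isUnit_fst.mpr hu)
    obtain ⟨e, q, he, hq, hqe⟩ := h x.fst hfst
    rcases hqe with h' | h'
    · refine ⟨inl e, x - inl e, ?_, ?_, Or.inl (by abel)⟩
      · show inl e * inl e = inl e
        rw [inl_mul_inl, he]
      · exact tsze_nilpotent _ (by simpa [h'] using hq)
    · refine ⟨inl e, x + inl e, ?_, ?_, Or.inr (by abel)⟩
      · show inl e * inl e = inl e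
        rw [inl_mul_inl, he]
      · exact tsze_nilpotent _ (by simpa [h', sub_add_cancel] using hq)
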